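/- Let d ≥ 1, λ ∈ ℝ^d, and let (a_k)_{k∈ℤ^d} be complex numbers with a_{−k} = conj(a_k) for all k and ∑_{k∈ℤ^d} |k| |a_k| < ∞. Define the real-valued Lipschitz function ω(y₁) := ∑_{k∈ℤ^d} a_k e^{2πi (k·λ) y₁}. If the derivative ω' is not identically zero, then there exists A > 0 such that inf_{y₁∈ℝ} ∫₀^A ω'(y₁+t)² dt > 0. -/

import Mathlib

open MeasureTheory Real Set Filter
open Topology

noncomputable section

private lemma hasDerivAt_cexp_real (B : ℂ) (t : ℝ) :
    HasDerivAt (fun y : ℝ => Complex.exp (B * y)) (B * Complex.exp (B * t)) t := by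
  have h1 : HasDerivAt (fun y : ℝ => (B * y : ℂ)) B t := by
    simpa using ((hasDerivAt_id (t : ℂ)).const_mul B).comp_ofReal
  rw [mul_comm]
  exact (Complex.hasDerivAt_exp (B * t)).comp t h1

private lemma norm_cexp_two_pi (r s : ℝ) :
    ‖Complex.exp (2 * (Real.pi : ℂ) * Complex.I * (r : ℂ) * (s : ℂ))‖ = 1 := by
  have h : (2 * (Real.pi : ℂ) * Complex.I * (r : ℂ) * (s : ℂ))
      = ((2 * Real.pi * r * s : ℝ) : ℂ) * Complex.I := by push_cast; ring
  rw [h, Complex.norm_exp_ofReal_mul_I]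

/-- Quasi-periodic case: if `ω(y₁) = ∑_{k∈ℤ^d} a_k e^{2πi(k·λ)y₁}` is real valued
(`a_{−k} = conj a_k`) with `∑ |k| |a_k| < ∞`, and `ω'` is not identically zero, then
the uniform non-degeneracy condition `∃ A > 0, inf_{y₁} ∫₀^A ω'(y₁+t)² dt > 0` holds. -/
theorem stmt5 (d : ℕ) (hd : 1 ≤ d) (lam : Fin d → ℝ) (a : (Fin d → ℤ) → ℂ)
    (hreal : ∀ k : Fin d → ℤ, a (-k) = (starRingEnd ℂ) (a k))
    (hsum : Summable fun k : Fin d → ℤ => (∑ i, (|k i| : ℝ)) * ‖a k‖)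
    (ω : ℝ → ℝ)
    (hω : ∀ y₁ : ℝ, ω y₁ =
      (∑' k : Fin d → ℤ,
        a k * Complex.exp (2 * Real.pi * Complex.I *
          ((∑ i, (k i : ℝ) * lam i : ℝ) : ℂ) * (y₁ : ℂ))).re)
    (hne : ¬ ∀ t, deriv ω t = 0) :
    ∃ A > 0, 0 < ⨅ y₁ : ℝ, ∫ t in (0 : ℝ)..A, (deriv ω (y₁ + t)) ^ 2 := by
  classical
  obtain ⟨t₀, ht₀⟩ := not_forall.mp hne
  let μ : (Fin d → ℤ) → ℝ := fun k => ∑ i, (k i : ℝ) * lam i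
  let b : (Fin d → ℤ) → ℂ := fun k => 2 * (Real.pi : ℂ) * Complex.I * ((μ k : ℝ) : ℂ)
  let c : (Fin d → ℤ) → ℂ := fun k => a k * b k
  -- basic bounds
  have hμ_le : ∀ k, |μ k| ≤ (∑ i, (|k i| : ℝ)) * (∑ i, |lam i|) := by
    intro k
    calc |μ k| ≤ ∑ i, |(k i : ℝ) * lam i| := Finset.abs_sum_le_sum_abs _ _
    _ ≤ ∑ i, (|k i| : ℝ) * (∑ j, |lam j|) := by
        apply Finset.sum_le_sum
        intro i _
        rw [abs_mul]
        exact mul_le_mul_of_nonneg_left (Finset.single_le_sum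
          (fun j _ => abs_nonneg (lam j)) (Finset.mem_univ i)) (abs_nonneg _)
    _ = _ := by rw [← Finset.sum_mul]
  have hbnorm : ∀ k, ‖b k‖ = 2 * Real.pi * |μ k| := by
    intro k
    simp only [b, norm_mul, Complex.norm_ofNat, Complex.norm_I,
      Complex.norm_real, Real.norm_eq_abs, abs_of_pos Real.pi_pos, mul_one]
  have hcsum : Summable fun k => ‖c k‖ := by
    apply Summable.of_nonneg_of_le (fun k => norm_nonneg _)
      (f := fun k => (2 * Real.pi * (∑ i, |lam i|)) * ((∑ i, (|k i| : ℝ)) * ‖a k‖))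
    · intro k
      have h1 : ‖c k‖ = ‖a k‖ * ‖b k‖ := norm_mul _ _
      rw [h1, hbnorm]
      have h3 := mul_le_mul_of_nonneg_left (hμ_le k)
        (by positivity : (0:ℝ) ≤ 2 * Real.pi * ‖a k‖)
      calc ‖a k‖ * (2 * Real.pi * |μ k|) = 2 * Real.pi * ‖a k‖ * |μ k| := by ring
      _ ≤ 2 * Real.pi * ‖a k‖ * ((∑ i, |(k i : ℝ)|) * ∑ i, |lam i|) := h3
      _ = (2 * Real.pi * (∑ i, |lam i|)) * ((∑ i, |(k i : ℝ)|) * ‖a k‖) := by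
          ring
    · exact hsum.mul_left _
  -- the derivative series g
  let g : ℝ → ℂ := fun t => ∑' k, c k * Complex.exp (b k * t)
  have hexp1 : ∀ (k : (Fin d → ℤ)) (t : ℝ), ‖Complex.exp (b k * t)‖ = 1 := by
    intro k t
    exact norm_cexp_two_pi (μ k) t
  have hterm_norm : ∀ (k : (Fin d → ℤ)) (t : ℝ), ‖c k * Complex.exp (b k * t)‖ = ‖c k‖ := by
    intro k t
    rw [norm_mul, hexp1, mul_one]
  have hgsummable : ∀ t : ℝ, Summable (fun k => c k * Complex.exp (b k * t)) := by
    intro t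
    apply Summable.of_norm
    simpa only [hterm_norm] using hcsum
  have hgcont : Continuous g := by
    apply continuous_tsum (u := fun k => ‖c k‖)
    · intro k
      exact (continuous_const.mul ((Complex.continuous_exp).comp
        ((continuous_const.mul (Complex.continuous_ofReal)))))
    · exact hcsum
    · intro k t; exact le_of_eq (hterm_norm k t)
  -- summability of a
  have hasum : Summable fun k => ‖a k‖ := by
    apply Summable.of_norm_bounded_eventually
      (g := fun k => (∑ i, (|k i| : ℝ)) * ‖a k‖) hsum
    rw [Filter.eventually_cofinite]
    apply Set.Finite.subset (Set.finite_singleton (0 : (Fin d → ℤ)))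
    intro k hk
    simp only [Set.mem_setOf_eq, norm_norm, not_le] at hk
    simp only [Set.mem_singleton_iff]
    by_contra hk0
    have h1 : (1:ℝ) ≤ ∑ i, (|k i| : ℝ) := by
      have hex : ∃ i, k i ≠ 0 := by
        by_contra h; push_neg at h; exact hk0 (funext h)
      obtain ⟨i, hi⟩ := hex
      have h2 : (1:ℝ) ≤ (|(k i : ℝ)| : ℝ) := by
        rw [← Int.cast_abs]
        exact_mod_cast Int.one_le_abs hi
      calc (1:ℝ) ≤ |(k i : ℝ)| := h2
      _ ≤ ∑ j, |(k j : ℝ)| := Finset.single_le_sum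
            (f := fun j => |(k j : ℝ)|) (fun j _ => abs_nonneg _) (Finset.mem_univ i)
    have h2 : ‖a k‖ = ‖a k‖ := rfl
    nlinarith [norm_nonneg (a k)]
  -- deriv ω = re g
  have hF : ∀ y : ℝ, HasDerivAt (fun z : ℝ => ∑' k, a k * Complex.exp (b k * z)) (g y) y := by
    intro y
    apply hasDerivAt_tsum (u := fun k => ‖c k‖) hcsum
      (g' := fun k (t : ℝ) => c k * Complex.exp (b k * (t : ℂ)))
    · intro k t
      have := (hasDerivAt_cexp_real (b k) t).const_mul (a k)
      exact this.congr_deriv (by simp only [c]; ring)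
    · intro k t; exact le_of_eq (hterm_norm k t)
    · show Summable fun k => a k * Complex.exp (b k * ((0:ℝ) : ℂ))
      apply Summable.of_norm
      simp only [Complex.ofReal_zero, mul_zero, Complex.exp_zero, mul_one]
      exact hasum
  have hωF : ∀ y : ℝ, ω y = (∑' k, a k * Complex.exp (b k * y)).re := hω
  have hderiv : ∀ t : ℝ, deriv ω t = (g t).re := by
    intro t
    have h1 : HasDerivAt ω ((g t).re) t := by
      have h2 := (Complex.reCLM.hasFDerivAt (x := ∑' k, a k * Complex.exp (b k * t))
        ).comp_hasDerivAt t (hF t)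
      have h3 : ω = fun (y : ℝ) => Complex.reCLM (∑' k, a k * Complex.exp (b k * (y : ℂ))) :=
        funext fun y => hωF y
      rw [h3]
      exact h2
    exact h1.deriv
  -- reality of g
  have hμneg : ∀ k : (Fin d → ℤ), μ (-k) = - μ k := by
    intro k
    simp only [μ]
    rw [← Finset.sum_neg_distrib]
    apply Finset.sum_congr rfl
    intro i _
    push_cast [Pi.neg_apply]
    ring
  have hbneg : ∀ k : (Fin d → ℤ), b (-k) = - b k := by
    intro k
    simp only [b, hμneg]
    push_cast
    ring
  have hbconj : ∀ k : (Fin d → ℤ), (starRingEnd ℂ) (b k) = - b k := by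
    intro k
    simp only [b, map_mul, Complex.conj_I, Complex.conj_ofReal, map_ofNat]
    ring
  have hcconj : ∀ k : (Fin d → ℤ), (starRingEnd ℂ) (c k) = c (-k) := by
    intro k
    simp only [c, map_mul, ← hreal k, hbneg, hbconj]
    try ring
  have htermconj : ∀ (k : (Fin d → ℤ)) (t : ℝ),
      (starRingEnd ℂ) (c k * Complex.exp (b k * t)) = c (-k) * Complex.exp (b (-k) * t) := by
    intro k t
    rw [map_mul, hcconj]
    congr 1
    rw [← Complex.exp_conj, map_mul, hbconj, Complex.conj_ofReal, hbneg]
  have hgreal : ∀ t : ℝ, (starRingEnd ℂ) (g t) = g t := by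
    intro t
    have h1 : (starRingEnd ℂ) (g t) = ∑' k, (starRingEnd ℂ) (c k * Complex.exp (b k * t)) := by
      exact tsum_star
    rw [h1]
    have h2 : ∀ k : (Fin d → ℤ), (starRingEnd ℂ) (c k * Complex.exp (b k * t))
        = (fun k => c k * Complex.exp (b k * t)) ((Equiv.neg (Fin d → ℤ)) k) := by
      intro k; exact htermconj k t
    rw [tsum_congr h2]
    exact (Equiv.neg (Fin d → ℤ)).tsum_eq (fun k => c k * Complex.exp (b k * (t : ℂ)))
  have him0 : ∀ t : ℝ, (g t).im = 0 := fun t => Complex.conj_eq_iff_im.mp (hgreal t)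
  -- g t₀ ≠ 0
  have hgne : g t₀ ≠ 0 := by
    intro h
    apply ht₀
    rw [hderiv t₀, h, Complex.zero_re]
  -- fiber sums
  let S : ℝ → ℂ := fun v => ∑' k : (μ ⁻¹' {v} : Set (Fin d → ℤ)), c k
  have hS : ∃ v, S v ≠ 0 := by
    by_contra h
    push_neg at h
    have h1 : HasSum (fun k => c k * Complex.exp (b k * t₀)) (g t₀) := (hgsummable t₀).hasSum
    have h2 := h1.tsum_fiberwise μ
    have h3 : ∀ v : ℝ, ∑' k : (μ ⁻¹' {v} : Set (Fin d → ℤ)), c ↑k * Complex.exp (b ↑k * t₀) = 0 := by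
      intro v
      have h4 : ∀ k : (μ ⁻¹' {v} : Set (Fin d → ℤ)), c ↑k * Complex.exp (b ↑k * t₀)
          = c ↑k * Complex.exp (2 * (Real.pi : ℂ) * Complex.I * (v : ℂ) * t₀) := by
        intro k
        have h5 : μ ↑k = v := k.2
        simp only [b, h5]
      rw [tsum_congr h4, tsum_mul_right]
      have h7 : (∑' (x : (μ ⁻¹' {v} : Set (Fin d → ℤ))), c ↑x) = 0 := h v
      rw [h7, zero_mul]
    have h6 : HasSum (fun _ : ℝ => (0 : ℂ)) (g t₀) := by
      have := h2
      simp only [h3] at this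
      exact this
    exact hgne ((hasSum_zero.unique h6).symm)
  obtain ⟨v₀, hv₀⟩ := hS
  -- the double-index setup
  let w : (Fin d → ℤ) × (Fin d → ℤ) → ℝ := fun p => ‖c p.1 * (starRingEnd ℂ) (c p.2)‖
  have hwsum : Summable w := by
    exact Summable.mul_norm (f := c) (g := fun k => (starRingEnd ℂ) (c k)) hcsum
      (by simpa only [RCLike.norm_conj] using hcsum)
  let z : (Fin d → ℤ) × (Fin d → ℤ) → ℂ := fun p => if μ p.1 = μ p.2 then c p.1 * (starRingEnd ℂ) (c p.2) else 0
  have hzsum : Summable z := by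
    apply Summable.of_norm_bounded hwsum
    intro p
    simp only [z]
    split_ifs
    · exact le_refl _
    · simp [w]; positivity
  let M : ℂ := ∑' p, z p
  -- conjugate fiber sums
  have hSconj : ∀ v : ℝ, ∑' k : (μ ⁻¹' {v} : Set (Fin d → ℤ)), (starRingEnd ℂ) (c ↑k)
      = (starRingEnd ℂ) (S v) := by
    intro v
    exact (tsum_star (f := fun k : (μ ⁻¹' {v} : Set (Fin d → ℤ)) => c ↑k)).symm
  -- M.re > 0
  have hMre : 0 < M.re := by
    have h1 := hzsum.hasSum.tsum_fiberwise (fun p : (Fin d → ℤ) × (Fin d → ℤ) => (μ p.1, μ p.2))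
    have hfib : ∀ q : ℝ × ℝ,
        (∑' p : ((fun p : (Fin d → ℤ) × (Fin d → ℤ) => (μ p.1, μ p.2)) ⁻¹' {q} : Set ((Fin d → ℤ) × (Fin d → ℤ))), z ↑p)
        = if q.1 = q.2 then S q.1 * (starRingEnd ℂ) (S q.2) else 0 := by
      intro q
      by_cases hq : q.1 = q.2
      · rw [if_pos hq]
        -- equivalence with product of fibers
        let E : ((fun p : (Fin d → ℤ) × (Fin d → ℤ) => (μ p.1, μ p.2)) ⁻¹' {q} : Set ((Fin d → ℤ) × (Fin d → ℤ))) ≃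
            ((μ ⁻¹' {q.1} : Set (Fin d → ℤ)) × (μ ⁻¹' {q.2} : Set (Fin d → ℤ))) :=
          { toFun := fun p => (⟨(↑p : (Fin d → ℤ) × (Fin d → ℤ)).1, congrArg Prod.fst p.2⟩,
              ⟨(↑p : (Fin d → ℤ) × (Fin d → ℤ)).2, congrArg Prod.snd p.2⟩)
            invFun := fun r => ⟨((↑r.1 : (Fin d → ℤ)), (↑r.2 : (Fin d → ℤ))), by
              have h1 : μ (↑r.1 : (Fin d → ℤ)) = q.1 := r.1.2
              have h2 : μ (↑r.2 : (Fin d → ℤ)) = q.2 := r.2.2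
              show ((μ _, μ _) : ℝ × ℝ) = q
              rw [h1, h2]⟩
            left_inv := fun p => rfl
            right_inv := fun r => rfl }
        have h2 : ∀ p : ((fun p : (Fin d → ℤ) × (Fin d → ℤ) => (μ p.1, μ p.2)) ⁻¹' {q} : Set ((Fin d → ℤ) × (Fin d → ℤ))),
            z ↑p = c (↑p : (Fin d → ℤ) × (Fin d → ℤ)).1 * (starRingEnd ℂ) (c (↑p : (Fin d → ℤ) × (Fin d → ℤ)).2) := by
          intro p
          have h3 : μ (↑p : (Fin d → ℤ) × (Fin d → ℤ)).1 = q.1 := congrArg Prod.fst p.2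
          have h4 : μ (↑p : (Fin d → ℤ) × (Fin d → ℤ)).2 = q.2 := congrArg Prod.snd p.2
          simp only [z, h3, h4, hq, if_pos]
        rw [tsum_congr h2]
        have h5 := E.symm.tsum_eq (f := fun p : ((fun p : (Fin d → ℤ) × (Fin d → ℤ) => (μ p.1, μ p.2)) ⁻¹' {q}
            : Set ((Fin d → ℤ) × (Fin d → ℤ))) => c (↑p : (Fin d → ℤ) × (Fin d → ℤ)).1 * (starRingEnd ℂ) (c (↑p : (Fin d → ℤ) × (Fin d → ℤ)).2))
        rw [← h5]
        have h6 : ∀ r : ((μ ⁻¹' {q.1} : Set (Fin d → ℤ)) × (μ ⁻¹' {q.2} : Set (Fin d → ℤ))),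
            c ((↑(E.symm r) : (Fin d → ℤ) × (Fin d → ℤ))).1 * (starRingEnd ℂ) (c ((↑(E.symm r) : (Fin d → ℤ) × (Fin d → ℤ))).2)
            = c ↑r.1 * (starRingEnd ℂ) (c ↑r.2) := by
          rintro ⟨⟨k, hk⟩, ⟨l, hl⟩⟩
          rfl
        have h7 := tsum_mul_tsum_of_summable_norm
          (f := fun k : (μ ⁻¹' {q.1} : Set (Fin d → ℤ)) => c ↑k)
          (g := fun l : (μ ⁻¹' {q.2} : Set (Fin d → ℤ)) => (starRingEnd ℂ) (c ↑l))
          (hcsum.subtype (μ ⁻¹' {q.1}))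
          (by simp only [RCLike.norm_conj]; exact hcsum.subtype (μ ⁻¹' {q.2}))
        rw [tsum_congr h6, ← h7, hSconj q.2]
      · rw [if_neg hq]
        have h2 : ∀ p : ((fun p : (Fin d → ℤ) × (Fin d → ℤ) => (μ p.1, μ p.2)) ⁻¹' {q} : Set ((Fin d → ℤ) × (Fin d → ℤ))),
            z ↑p = 0 := by
          intro p
          have h3 : μ (↑p : (Fin d → ℤ) × (Fin d → ℤ)).1 = q.1 := congrArg Prod.fst p.2
          have h4 : μ (↑p : (Fin d → ℤ) × (Fin d → ℤ)).2 = q.2 := congrArg Prod.snd p.2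
          simp only [z, h3, h4]
          rw [if_neg hq]
        rw [tsum_congr h2, tsum_zero]
    rw [funext hfib] at h1
    have h7 := Complex.reCLM.hasSum h1
    apply lt_of_lt_of_le _ (le_hasSum h7 (v₀, v₀) ?_)
    · show 0 < Complex.reCLM (if (v₀, v₀).1 = (v₀, v₀).2
        then S (v₀, v₀).1 * (starRingEnd ℂ) (S (v₀, v₀).2) else 0)
      simp only [if_pos rfl]
      show 0 < (S v₀ * (starRingEnd ℂ) (S v₀)).re
      rw [Complex.mul_conj]
      simp only [Complex.ofReal_re]
      exact Complex.normSq_pos.mpr hv₀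
    · intro q hq
      show 0 ≤ Complex.reCLM (if q.1 = q.2 then S q.1 * (starRingEnd ℂ) (S q.2) else 0)
      by_cases h : q.1 = q.2
      · simp only [if_pos h]
        obtain ⟨q1, q2⟩ := q
        simp only at h
        subst h
        show 0 ≤ (S q1 * (starRingEnd ℂ) (S q1)).re
        rw [Complex.mul_conj]
        simp only [Complex.ofReal_re]
        exact Complex.normSq_nonneg _
      · simp [if_neg h]
  -- ============ analytic part ============
  let ν : (Fin d → ℤ) × (Fin d → ℤ) → ℝ := fun p => μ p.1 - μ p.2
  let zz : (Fin d → ℤ) × (Fin d → ℤ) → ℂ := fun p => c p.1 * (starRingEnd ℂ) (c p.2)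
  let ee : ℝ → (Fin d → ℤ) × (Fin d → ℤ) → ℝ := fun A p =>
    if ν p = 0 then 0 else min A ((Real.pi * |ν p|)⁻¹)
  let η : ℝ → ℝ := fun A => ∑' p, w p * ee A p
  have hν0 : ∀ p : (Fin d → ℤ) × (Fin d → ℤ), (ν p = 0) ↔ (μ p.1 = μ p.2) :=
    fun p => sub_eq_zero
  have hee_nonneg : ∀ (A : ℝ), 0 < A → ∀ p, 0 ≤ ee A p := by
    intro A hA p
    simp only [ee]
    split_ifs with h
    · exact le_rfl
    · exact le_min hA.le (by positivity)
  have hee_le : ∀ (A : ℝ), 0 < A → ∀ p, ee A p ≤ A := by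
    intro A hA p
    simp only [ee]
    split_ifs with h
    · exact hA.le
    · exact min_le_left _ _
  have hesum : ∀ (A : ℝ), 0 < A → Summable (fun p => w p * ee A p) := by
    intro A hA
    apply Summable.of_nonneg_of_le
      (fun p => mul_nonneg (norm_nonneg _) (hee_nonneg A hA p))
      (fun p => mul_le_mul_of_nonneg_left (hee_le A hA p) (norm_nonneg _))
      (hwsum.mul_right A)
  -- auxiliary facts for the expansion
  have hexp1' : ∀ (l : Fin d → ℤ) (s : ℝ), ‖Complex.exp ((- b l) * s)‖ = 1 := by
    intro l s
    rw [← hbneg]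
    exact hexp1 (-l) s
  have hconjg : ∀ s : ℝ, (starRingEnd ℂ) (g s)
      = ∑' l, (starRingEnd ℂ) (c l) * Complex.exp ((- b l) * s) := by
    intro s
    have h1 : (starRingEnd ℂ) (g s) = ∑' l, (starRingEnd ℂ) (c l * Complex.exp (b l * s)) :=
      tsum_star
    rw [h1]
    apply tsum_congr
    intro l
    rw [map_mul]
    congr 1
    rw [← Complex.exp_conj, map_mul, hbconj, Complex.conj_ofReal]
  have hTnorm : ∀ (p : (Fin d → ℤ) × (Fin d → ℤ)) (s : ℝ),
      ‖zz p * Complex.exp (2 * (Real.pi : ℂ) * Complex.I * ((ν p : ℝ) : ℂ) * (s : ℂ))‖ = w p := by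
    intro p s
    rw [norm_mul, norm_cexp_two_pi, mul_one]
  have hexpand : ∀ s : ℝ, g s * (starRingEnd ℂ) (g s)
      = ∑' p : (Fin d → ℤ) × (Fin d → ℤ),
        zz p * Complex.exp (2 * (Real.pi : ℂ) * Complex.I * ((ν p : ℝ) : ℂ) * (s : ℂ)) := by
    intro s
    rw [hconjg s]
    rw [tsum_mul_tsum_of_summable_norm
      (by simpa only [hterm_norm] using hcsum : Summable fun k => ‖c k * Complex.exp (b k * (s:ℂ))‖)
      (by simp only [norm_mul, RCLike.norm_conj, hexp1', mul_one]; exact hcsum :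
        Summable fun l => ‖(starRingEnd ℂ) (c l) * Complex.exp ((- b l) * (s:ℂ))‖)]
    apply tsum_congr
    intro p
    have h2 : Complex.exp (b p.1 * s) * Complex.exp ((- b p.2) * s)
        = Complex.exp (2 * (Real.pi : ℂ) * Complex.I * ((ν p : ℝ) : ℂ) * (s : ℂ)) := by
      rw [← Complex.exp_add]
      congr 1
      simp only [b, ν]
      push_cast
      ring
    calc c p.1 * Complex.exp (b p.1 * s) * ((starRingEnd ℂ) (c p.2) * Complex.exp ((- b p.2) * s))
        = zz p * (Complex.exp (b p.1 * s) * Complex.exp ((- b p.2) * s)) := by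
          simp only [zz]; ring
    _ = _ := by rw [h2]
  -- the key quantitative estimate
  have key : ∀ A : ℝ, 0 < A → ∀ y : ℝ,
      A * M.re - η A ≤ ∫ t in (0:ℝ)..A, (deriv ω (y + t)) ^ 2 := by
    intro A hA y
    have hyA : y ≤ y + A := by linarith
    have hIvol : volume (Ioc y (y + A)) = ENNReal.ofReal A := by
      rw [Real.volume_Ioc]; congr 1; ring
    have hIvol_lt : volume (Ioc y (y + A)) < ⊤ := by rw [hIvol]; exact ENNReal.ofReal_lt_top
    have hTcont : ∀ p : (Fin d → ℤ) × (Fin d → ℤ), Continuous fun s : ℝ =>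
        zz p * Complex.exp (2 * (Real.pi : ℂ) * Complex.I * ((ν p : ℝ) : ℂ) * (s : ℂ)) := by
      intro p
      exact continuous_const.mul (Complex.continuous_exp.comp
        (continuous_const.mul Complex.continuous_ofReal))
    -- interchange of sum and integral
    have hinter : ∫ s in Ioc y (y + A), (∑' p : (Fin d → ℤ) × (Fin d → ℤ),
          zz p * Complex.exp (2 * (Real.pi : ℂ) * Complex.I * ((ν p : ℝ) : ℂ) * (s : ℂ)))
        = ∑' p : (Fin d → ℤ) × (Fin d → ℤ), ∫ s in Ioc y (y + A),
          zz p * Complex.exp (2 * (Real.pi : ℂ) * Complex.I * ((ν p : ℝ) : ℂ) * (s : ℂ)) := by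
      apply integral_tsum
      · intro p
        exact (hTcont p).aestronglyMeasurable
      · have h1 : ∀ p : (Fin d → ℤ) × (Fin d → ℤ), ∫⁻ s in Ioc y (y + A),
            (‖zz p * Complex.exp (2 * (Real.pi : ℂ) * Complex.I * ((ν p : ℝ) : ℂ) * (s : ℂ))‖₊ : ENNReal)
            = ENNReal.ofReal (w p * A) := by
          intro p
          have h2 : (fun s : ℝ => (‖zz p * Complex.exp
              (2 * (Real.pi : ℂ) * Complex.I * ((ν p : ℝ) : ℂ) * (s : ℂ))‖₊ : ENNReal))
              = fun _ => ENNReal.ofReal (w p) := by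
            funext s
            rw [← enorm_eq_nnnorm, ← ofReal_norm, hTnorm]
          rw [h2, setLIntegral_const, hIvol, ← ENNReal.ofReal_mul (norm_nonneg _)]
        simp only [enorm_eq_nnnorm, h1]
        rw [← ENNReal.ofReal_tsum_of_nonneg
          (fun p => mul_nonneg (norm_nonneg _) hA.le) (hwsum.mul_right A)]
        exact ENNReal.ofReal_ne_top
    -- per term evaluation
    have hterm_int : ∀ p : (Fin d → ℤ) × (Fin d → ℤ),
        (∫ s in Ioc y (y + A), zz p * Complex.exp (2 * (Real.pi : ℂ) * Complex.I * ((ν p : ℝ) : ℂ) * (s : ℂ)))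
        = zz p * (∫ s in Ioc y (y + A), Complex.exp (2 * (Real.pi : ℂ) * Complex.I * ((ν p : ℝ) : ℂ) * (s : ℂ))) :=
      fun p => integral_const_mul _ _
    have hJ0 : ∀ p : (Fin d → ℤ) × (Fin d → ℤ), ν p = 0 → (∫ s in Ioc y (y + A), Complex.exp (2 * (Real.pi : ℂ) * Complex.I * ((ν p : ℝ) : ℂ) * (s : ℂ))) = (A : ℂ) := by
      intro p hp
      have h1 : (fun s : ℝ => Complex.exp (2 * (Real.pi : ℂ) * Complex.I * ((ν p : ℝ) : ℂ) * (s : ℂ))) = fun _ => (1 : ℂ) := by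
        funext s; rw [hp]; simp
      rw [h1, setIntegral_const, measureReal_def, hIvol, ENNReal.toReal_ofReal hA.le]
      simp
    have hJA : ∀ p : (Fin d → ℤ) × (Fin d → ℤ), ‖(∫ s in Ioc y (y + A), Complex.exp (2 * (Real.pi : ℂ) * Complex.I * ((ν p : ℝ) : ℂ) * (s : ℂ)))‖ ≤ A := by
      intro p
      have h1 := norm_setIntegral_le_of_norm_le_const (C := 1) hIvol_lt
        (fun s _ => le_of_eq (norm_cexp_two_pi (ν p) s))
      rw [measureReal_def, hIvol, ENNReal.toReal_ofReal hA.le, one_mul] at h1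
      exact h1
    have hJbound : ∀ p : (Fin d → ℤ) × (Fin d → ℤ), ν p ≠ 0 →
        ‖(∫ s in Ioc y (y + A), Complex.exp (2 * (Real.pi : ℂ) * Complex.I * ((ν p : ℝ) : ℂ) * (s : ℂ)))‖ ≤ (Real.pi * |ν p|)⁻¹ := by
      intro p hp
      have hνabs : 0 < |ν p| := abs_pos.mpr hp
      have hc0 : (2 * (Real.pi : ℂ) * Complex.I * ((ν p : ℝ) : ℂ)) ≠ 0 := by
        apply mul_ne_zero
        apply mul_ne_zero
        apply mul_ne_zero
        · norm_num
        · exact Complex.ofReal_ne_zero.mpr Real.pi_ne_zero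
        · exact Complex.I_ne_zero
        · exact Complex.ofReal_ne_zero.mpr hp
      have heq : (∫ s in Ioc y (y + A), Complex.exp (2 * (Real.pi : ℂ) * Complex.I * ((ν p : ℝ) : ℂ) * (s : ℂ)))
          = (Complex.exp (2 * (Real.pi : ℂ) * Complex.I * ((ν p : ℝ) : ℂ) * ((y + A : ℝ) : ℂ))
            - Complex.exp (2 * (Real.pi : ℂ) * Complex.I * ((ν p : ℝ) : ℂ) * ((y : ℝ) : ℂ)))
            / (2 * (Real.pi : ℂ) * Complex.I * ((ν p : ℝ) : ℂ)) := by
        rw [← intervalIntegral.integral_of_le hyA]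
        exact integral_exp_mul_complex hc0
      rw [heq, norm_div]
      have hnc : ‖(2 * (Real.pi : ℂ) * Complex.I * ((ν p : ℝ) : ℂ))‖ = 2 * Real.pi * |ν p| := by
        simp [norm_mul, Complex.norm_ofNat, Complex.norm_I,
          Complex.norm_real, abs_of_pos Real.pi_pos]
      rw [hnc]
      have h2 : ‖Complex.exp (2 * (Real.pi : ℂ) * Complex.I * ((ν p : ℝ) : ℂ) * ((y + A : ℝ) : ℂ))
          - Complex.exp (2 * (Real.pi : ℂ) * Complex.I * ((ν p : ℝ) : ℂ) * ((y : ℝ) : ℂ))‖ ≤ 2 := by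
        refine (norm_sub_le _ _).trans ?_
        rw [norm_cexp_two_pi, norm_cexp_two_pi]
        norm_num
      rw [div_le_iff₀ (by positivity)]
      calc ‖Complex.exp (2 * (Real.pi : ℂ) * Complex.I * ((ν p : ℝ) : ℂ) * ((y + A : ℝ) : ℂ))
          - Complex.exp (2 * (Real.pi : ℂ) * Complex.I * ((ν p : ℝ) : ℂ) * ((y : ℝ) : ℂ))‖ ≤ 2 := h2
      _ = (Real.pi * |ν p|)⁻¹ * (2 * Real.pi * |ν p|) := by
          have hπν : Real.pi * |ν p| ≠ 0 := ne_of_gt (mul_pos Real.pi_pos hνabs)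
          field_simp
    -- splitting the sum
    have hf1sum : Summable (fun p : (Fin d → ℤ) × (Fin d → ℤ) =>
        if ν p = 0 then zz p * (A : ℂ) else 0) := by
      apply Summable.of_norm_bounded (hwsum.mul_right A)
      intro p
      by_cases h : ν p = 0
      · rw [if_pos h, norm_mul, Complex.norm_real, Real.norm_eq_abs, abs_of_pos hA]
      · rw [if_neg h, norm_zero]
        exact mul_nonneg (norm_nonneg _) hA.le
    have hf2sum : Summable (fun p : (Fin d → ℤ) × (Fin d → ℤ) =>
        if ν p = 0 then (0 : ℂ) else zz p * (∫ s in Ioc y (y + A), Complex.exp (2 * (Real.pi : ℂ) * Complex.I * ((ν p : ℝ) : ℂ) * (s : ℂ)))) := by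
      apply Summable.of_norm_bounded (hwsum.mul_right A)
      intro p
      by_cases h : ν p = 0
      · rw [if_pos h, norm_zero]
        exact mul_nonneg (norm_nonneg _) hA.le
      · rw [if_neg h, norm_mul]
        exact mul_le_mul_of_nonneg_left (hJA p) (norm_nonneg _)
    have hf1eq : (∑' p : (Fin d → ℤ) × (Fin d → ℤ), if ν p = 0 then zz p * (A : ℂ) else 0)
        = M * (A : ℂ) := by
      have h1 : ∀ p : (Fin d → ℤ) × (Fin d → ℤ),
          (if ν p = 0 then zz p * (A : ℂ) else 0) = z p * (A : ℂ) := by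
        intro p
        by_cases h : ν p = 0
        · rw [if_pos h]
          have h2 : z p = zz p := by simp only [z]; rw [if_pos ((hν0 p).mp h)]
          rw [h2]
        · rw [if_neg h]
          have h2 : z p = 0 := by
            simp only [z]; rw [if_neg (fun hh => h ((hν0 p).mpr hh))]
          rw [h2, zero_mul]
      rw [tsum_congr h1, tsum_mul_right]
    have hstep3 : (∫ s in Ioc y (y + A), g s * (starRingEnd ℂ) (g s))
        = M * (A : ℂ) + ∑' p : (Fin d → ℤ) × (Fin d → ℤ),
            (if ν p = 0 then (0 : ℂ) else zz p * (∫ s in Ioc y (y + A), Complex.exp (2 * (Real.pi : ℂ) * Complex.I * ((ν p : ℝ) : ℂ) * (s : ℂ)))) := by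
      calc (∫ s in Ioc y (y + A), g s * (starRingEnd ℂ) (g s))
          = ∫ s in Ioc y (y + A), (∑' p : (Fin d → ℤ) × (Fin d → ℤ), zz p * Complex.exp (2 * (Real.pi : ℂ) * Complex.I * ((ν p : ℝ) : ℂ) * (s : ℂ))) :=
            integral_congr_ae (Eventually.of_forall fun s => hexpand s)
      _ = ∑' p : (Fin d → ℤ) × (Fin d → ℤ), ∫ s in Ioc y (y + A), zz p * Complex.exp (2 * (Real.pi : ℂ) * Complex.I * ((ν p : ℝ) : ℂ) * (s : ℂ)) := hinter
      _ = ∑' p : (Fin d → ℤ) × (Fin d → ℤ), zz p * (∫ s in Ioc y (y + A), Complex.exp (2 * (Real.pi : ℂ) * Complex.I * ((ν p : ℝ) : ℂ) * (s : ℂ))) := tsum_congr hterm_int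
      _ = ∑' p : (Fin d → ℤ) × (Fin d → ℤ),
            ((if ν p = 0 then zz p * (A : ℂ) else 0)
              + (if ν p = 0 then (0 : ℂ) else zz p * (∫ s in Ioc y (y + A), Complex.exp (2 * (Real.pi : ℂ) * Complex.I * ((ν p : ℝ) : ℂ) * (s : ℂ))))) := by
          apply tsum_congr
          intro p
          by_cases h : ν p = 0
          · rw [if_pos h, if_pos h, hJ0 p h, add_zero]
          · rw [if_neg h, if_neg h, zero_add]
      _ = _ := by rw [Summable.tsum_add hf1sum hf2sum, hf1eq]
    -- bound on the remainder
    have hRle : ∀ p : (Fin d → ℤ) × (Fin d → ℤ),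
        ‖if ν p = 0 then (0 : ℂ) else zz p * (∫ s in Ioc y (y + A), Complex.exp (2 * (Real.pi : ℂ) * Complex.I * ((ν p : ℝ) : ℂ) * (s : ℂ)))‖ ≤ w p * ee A p := by
      intro p
      by_cases h : ν p = 0
      · rw [if_pos h, norm_zero]
        simp only [ee]
        rw [if_pos h, mul_zero]
      · rw [if_neg h, norm_mul]
        simp only [ee]
        rw [if_neg h]
        exact mul_le_mul_of_nonneg_left (le_min (hJA p) (hJbound p h)) (norm_nonneg _)
    have hf2normsum := Summable.of_nonneg_of_le (fun p => norm_nonneg _) hRle (hesum A hA)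
    have hRbound : ‖∑' p : (Fin d → ℤ) × (Fin d → ℤ),
        (if ν p = 0 then (0 : ℂ) else zz p * (∫ s in Ioc y (y + A), Complex.exp (2 * (Real.pi : ℂ) * Complex.I * ((ν p : ℝ) : ℂ) * (s : ℂ))))‖ ≤ η A := by
      calc ‖∑' p : (Fin d → ℤ) × (Fin d → ℤ), (if ν p = 0 then (0 : ℂ) else zz p * (∫ s in Ioc y (y + A), Complex.exp (2 * (Real.pi : ℂ) * Complex.I * ((ν p : ℝ) : ℂ) * (s : ℂ))))‖
          ≤ ∑' p : (Fin d → ℤ) × (Fin d → ℤ), ‖if ν p = 0 then (0 : ℂ) else zz p * (∫ s in Ioc y (y + A), Complex.exp (2 * (Real.pi : ℂ) * Complex.I * ((ν p : ℝ) : ℂ) * (s : ℂ)))‖ :=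
            norm_tsum_le_tsum_norm hf2normsum
      _ ≤ ∑' p, w p * ee A p := Summable.tsum_le_tsum hRle hf2normsum (hesum A hA)
      _ = η A := rfl
    -- the real part computations
    have hQre : ∀ s : ℝ, (deriv ω s) ^ 2 = (g s * (starRingEnd ℂ) (g s)).re := by
      intro s
      rw [hderiv s, Complex.mul_conj]
      simp only [Complex.ofReal_re, Complex.normSq_apply, him0 s]
      ring
    have hgconj_cont : Continuous fun s : ℝ => g s * (starRingEnd ℂ) (g s) :=
      hgcont.mul (Complex.continuous_conj.comp hgcont)
    have hstep1 : (∫ t in (0:ℝ)..A, (deriv ω (y + t)) ^ 2)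
        = ∫ s in Ioc y (y + A), (deriv ω s) ^ 2 := by
      have h1 := intervalIntegral.integral_comp_add_left
        (a := (0:ℝ)) (b := A) (f := fun s => (deriv ω s) ^ 2) y
      rw [add_zero] at h1
      rw [h1, intervalIntegral.integral_of_le hyA]
    have hstep2 : (∫ s in Ioc y (y + A), (deriv ω s) ^ 2)
        = (∫ s in Ioc y (y + A), g s * (starRingEnd ℂ) (g s)).re := by
      have h4 := integral_re (μ := volume.restrict (Ioc y (y + A)))
        (f := fun s => g s * (starRingEnd ℂ) (g s)) hgconj_cont.integrableOn_Ioc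
      simp only [RCLike.re_to_complex] at h4
      rw [← h4]
      apply integral_congr_ae
      apply Eventually.of_forall
      intro s
      exact hQre s
    rw [hstep1, hstep2, hstep3, Complex.add_re]
    have hMA : (M * (A : ℂ)).re = A * M.re := by
      simp [Complex.mul_re, Complex.ofReal_re, Complex.ofReal_im]
      ring
    rw [hMA]
    have h3 : |(∑' p : (Fin d → ℤ) × (Fin d → ℤ),
        (if ν p = 0 then (0 : ℂ) else zz p * (∫ s in Ioc y (y + A), Complex.exp (2 * (Real.pi : ℂ) * Complex.I * ((ν p : ℝ) : ℂ) * (s : ℂ))))).re| ≤ η A := by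
      refine le_trans (Complex.abs_re_le_norm _) ?_
      exact hRbound
    linarith [(abs_le.mp h3).1]
  -- choosing A
  have hlim : Tendsto (fun A : ℝ => ∑' p, (w p * ee A p / A)) atTop (𝓝 0) := by
    have h0 : Tendsto (fun A : ℝ => ∑' p : (Fin d → ℤ) × (Fin d → ℤ), (w p * ee A p / A))
        atTop (𝓝 (∑' _p : (Fin d → ℤ) × (Fin d → ℤ), (0:ℝ))) := by
      apply tendsto_tsum_of_dominated_convergence hwsum
      · intro p
        by_cases hp : ν p = 0
        · have h1 : (fun A : ℝ => w p * ee A p / A) = fun _ => 0 := by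
            funext A; simp [ee, hp]
          rw [h1]
          exact tendsto_const_nhds
        · apply Tendsto.congr' (f₁ := fun A : ℝ => w p * (Real.pi * |ν p|)⁻¹ / A)
          · filter_upwards [Filter.eventually_ge_atTop ((Real.pi * |ν p|)⁻¹)] with A hA
            simp only [ee, if_neg hp, min_eq_right hA]
          · exact Tendsto.div_atTop tendsto_const_nhds tendsto_id
      · filter_upwards [Filter.eventually_ge_atTop (1:ℝ)] with A hA
        intro p
        have hA0 : (0:ℝ) < A := lt_of_lt_of_le one_pos hA
        have hnn : 0 ≤ w p * ee A p / A := by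
          apply div_nonneg _ hA0.le
          exact mul_nonneg (norm_nonneg _) (hee_nonneg A hA0 p)
        rw [Real.norm_eq_abs, abs_of_nonneg hnn]
        have h5 : w p * ee A p ≤ w p * A :=
          mul_le_mul_of_nonneg_left (hee_le A hA0 p) (norm_nonneg _)
        calc w p * ee A p / A ≤ w p * A / A := by
              exact div_le_div_of_nonneg_right h5 hA0.le
        _ = w p := by rw [mul_div_assoc, div_self hA0.ne', mul_one]
    simpa using h0
  -- choose A large enough
  have hhalf : (0:ℝ) < M.re / 2 := half_pos hMre
  obtain ⟨A, hAlt, hA1⟩ :=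
    ((hlim.eventually_lt_const hhalf).and (Filter.eventually_ge_atTop (1:ℝ))).exists
  have hA0 : (0:ℝ) < A := lt_of_lt_of_le one_pos hA1
  have hηeq : η A = (∑' p, (w p * ee A p / A)) * A := by
    rw [← tsum_mul_right]
    apply tsum_congr
    intro p
    rw [div_mul_cancel₀ _ hA0.ne']
  have hηlt : η A < M.re / 2 * A := by
    rw [hηeq]
    exact mul_lt_mul_of_pos_right hAlt hA0
  refine ⟨A, hA0, ?_⟩
  have hpos : (0:ℝ) < A * M.re - η A := by nlinarith [mul_pos hA0 hMre]
  refine lt_of_lt_of_le hpos (le_ciInf ?_)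
  intro y
  exact key A hA0 y
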